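/- Let X and Y be uniformly discrete subsets of (−∞, 0), and let W = {0 = w_0 < w_1 < w_2 < …} ⊆ [0, ∞) satisfy c ≤ w_n − w_{n−1} ≤ C for all n ≥ 1 with constants 0 < c ≤ C. Suppose that for every w ∈ W, ∑_{x ∈ X} 1/(x − w)² = ∑_{y ∈ Y} 1/(y − w)². Then X = Y. -/

import Mathlib

open Set Filter Topology

private lemma sep_max {S : Set ℝ} {c : ℝ} (hc : 0 < c)
    (hsep : ∀ x ∈ S, ∀ y ∈ S, x ≠ y → c ≤ |x - y|)
    (hne : S.Nonempty) (hbdd : BddAbove S) : ∃ m ∈ S, ∀ p ∈ S, p ≤ m := by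
  obtain ⟨y, hyS, hy⟩ := exists_lt_of_lt_csSup hne (show sSup S - c < sSup S by linarith)
  refine ⟨y, hyS, fun p hp => ?_⟩
  by_contra hpy
  push_neg at hpy
  have h1 : p ≤ sSup S := le_csSup hbdd hp
  have h2 : c ≤ |p - y| := hsep p hp y hyS (by intro h; rw [h] at hpy; exact lt_irrefl _ hpy)
  rw [abs_of_pos (by linarith)] at h2
  linarith

private lemma summable_inv_sq {S : Set ℝ} {c r : ℝ} (hc : 0 < c)
    (hsep : ∀ x ∈ S, ∀ y ∈ S, x ≠ y → c ≤ |x - y|)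
    (hlt : ∀ p ∈ S, p < r) :
    Summable (fun p : S => (((r : ℝ) - (p : ℝ)) ^ 2)⁻¹) := by
  rcases S.eq_empty_or_nonempty with hS | hne
  · subst hS
    exact summable_empty
  obtain ⟨m, hmS, hmax⟩ := sep_max hc hsep hne ⟨r, fun p hp => (hlt p hp).le⟩
  have hmr : m < r := hlt m hmS
  set d : ℝ := r - m with hd
  have hd0 : 0 < d := by linarith
  set e : S → ℕ := fun p => ⌊(m - (p : ℝ)) / c⌋₊ with he
  have hinj : Function.Injective e := by
    intro p q hpq
    by_contra hne'
    have hcoe : (p : ℝ) ≠ (q : ℝ) := fun h => hne' (Subtype.ext h)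
    have hsep' : c ≤ |(p : ℝ) - q| := hsep p p.2 q q.2 hcoe
    have hp0 : 0 ≤ (m - (p : ℝ)) / c := div_nonneg (by linarith [hmax p p.2]) hc.le
    have hq0 : 0 ≤ (m - (q : ℝ)) / c := div_nonneg (by linarith [hmax q q.2]) hc.le
    have h1 : (m - (p : ℝ)) / c < e p + 1 := Nat.lt_floor_add_one _
    have h2 : (e p : ℝ) ≤ (m - (p : ℝ)) / c := Nat.floor_le hp0
    have h3 : (m - (q : ℝ)) / c < e q + 1 := Nat.lt_floor_add_one _
    have h4 : (e q : ℝ) ≤ (m - (q : ℝ)) / c := Nat.floor_le hq0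
    rw [hpq] at h1 h2
    have h1' : m - (p : ℝ) < ((e q : ℝ) + 1) * c := (div_lt_iff₀ hc).1 h1
    have h2' : (e q : ℝ) * c ≤ m - (p : ℝ) := (le_div_iff₀ hc).1 h2
    have h3' : m - (q : ℝ) < ((e q : ℝ) + 1) * c := (div_lt_iff₀ hc).1 h3
    have h4' : (e q : ℝ) * c ≤ m - (q : ℝ) := (le_div_iff₀ hc).1 h4
    have : |(p : ℝ) - q| < c := by
      rw [abs_lt]
      constructor <;> linarith
    linarith
  have hu : Summable (fun n : ℕ => ((d + c * n) ^ 2)⁻¹) := by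
    have hmin : 0 < min d c := lt_min hd0 hc
    have hcomp : Summable (fun n : ℕ => (min d c ^ 2)⁻¹ * ((n + 1 : ℝ) ^ 2)⁻¹) := by
      have : Summable (fun n : ℕ => ((n + 1 : ℝ) ^ 2)⁻¹) := by
        have h := (Real.summable_one_div_nat_pow (p := 2)).2 (by norm_num)
        have h2 := (summable_nat_add_iff (f := fun n : ℕ => 1 / (n : ℝ) ^ 2) 1).2 h
        refine h2.congr fun n => ?_
        push_cast
        rw [one_div]
      exact this.mul_left _
    refine hcomp.of_nonneg_of_le (fun n => by positivity) fun n => ?_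
    have h1 : min d c * (n + 1 : ℝ) ≤ d + c * n := by
      have h2 : min d c ≤ d := min_le_left _ _
      have h3 : min d c ≤ c := min_le_right _ _
      have : (0:ℝ) ≤ (n:ℝ) := Nat.cast_nonneg n
      nlinarith
    have h0 : 0 < min d c * (n + 1 : ℝ) := mul_pos hmin (by positivity)
    rw [← mul_inv, ← mul_pow]
    exact inv_anti₀ (pow_pos h0 2) (by nlinarith)
  refine ((hu.comp_injective hinj).of_nonneg_of_le (fun p => by positivity)) fun p => ?_
  have h1 : c * (e p : ℝ) ≤ m - (p : ℝ) := by
    have hp0 : 0 ≤ (m - (p : ℝ)) / c := div_nonneg (by linarith [hmax p p.2]) hc.le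
    have := Nat.floor_le hp0
    calc c * (e p : ℝ) ≤ c * ((m - (p : ℝ)) / c) := by
          exact mul_le_mul_of_nonneg_left this hc.le
      _ = m - (p : ℝ) := by field_simp
  have h2 : d + c * (e p) ≤ r - (p : ℝ) := by simp only [hd]; linarith
  have h3 : 0 < d + c * (e p : ℝ) := by positivity
  exact inv_anti₀ (by positivity) (by nlinarith)

private lemma cnorm_term {S : Set ℝ} {α : ℝ} (hα : ∀ p ∈ S, p < α)
    {z : ℂ} (hz : α ≤ z.re) (p : S) :
    ‖((z - ((p : ℝ) : ℂ)) ^ 2)⁻¹‖ ≤ ((α - (p : ℝ)) ^ 2)⁻¹ := by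
  have hp := hα p p.2
  have h1 : α - (p : ℝ) ≤ ‖z - ((p : ℝ) : ℂ)‖ := by
    have h2 : (z - ((p : ℝ) : ℂ)).re = z.re - (p : ℝ) := by
      simp [Complex.sub_re]
    calc α - (p : ℝ) ≤ z.re - (p : ℝ) := by linarith
      _ ≤ |(z - ((p : ℝ) : ℂ)).re| := by rw [h2]; exact le_abs_self _
      _ ≤ ‖z - ((p : ℝ) : ℂ)‖ := Complex.abs_re_le_norm _
  rw [norm_inv, norm_pow]
  exact inv_anti₀ (pow_pos (show (0:ℝ) < α - (p:ℝ) by linarith) 2)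
    (by nlinarith [norm_nonneg (z - ((p : ℝ) : ℂ))])

private lemma cnorm_bound {S : Set ℝ} {α : ℝ} (hα : ∀ p ∈ S, p < α)
    (hsum : Summable (fun p : S => ((α - (p : ℝ)) ^ 2)⁻¹)) {z : ℂ} (hz : α ≤ z.re) :
    ‖∑' p : S, ((z - ((p : ℝ) : ℂ)) ^ 2)⁻¹‖ ≤ ∑' p : S, ((α - (p : ℝ)) ^ 2)⁻¹ := by
  have hb := fun p : S => cnorm_term hα hz p
  have hsn : Summable (fun p : S => ‖((z - ((p : ℝ) : ℂ)) ^ 2)⁻¹‖) :=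
    hsum.of_nonneg_of_le (fun p => norm_nonneg _) hb
  calc ‖∑' p : S, ((z - ((p : ℝ) : ℂ)) ^ 2)⁻¹‖ ≤ ∑' p : S, ‖((z - ((p : ℝ) : ℂ)) ^ 2)⁻¹‖ :=
        norm_tsum_le_tsum_norm hsn
    _ ≤ _ := Summable.tsum_le_tsum hb hsn hsum

private lemma csummable {S : Set ℝ} {α : ℝ} (hα : ∀ p ∈ S, p < α)
    (hsum : Summable (fun p : S => ((α - (p : ℝ)) ^ 2)⁻¹)) {z : ℂ} (hz : α ≤ z.re) :
    Summable (fun p : S => ((z - ((p : ℝ) : ℂ)) ^ 2)⁻¹) := by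
  refine Summable.of_norm (hsum.of_nonneg_of_le (fun p => norm_nonneg _)
    (fun p => cnorm_term hα hz p))

private lemma cdiff {S : Set ℝ} {β : ℝ} (hβ : ∀ p ∈ S, p < β)
    (hsum : Summable (fun p : S => ((β - (p : ℝ)) ^ 2)⁻¹)) :
    DifferentiableOn ℂ (fun z => ∑' p : S, ((z - ((p : ℝ) : ℂ)) ^ 2)⁻¹)
      {z : ℂ | β < z.re} := by
  have hopen : IsOpen {z : ℂ | β < z.re} := isOpen_lt continuous_const Complex.continuous_re
  have htuo : TendstoUniformlyOn
      (fun (t : Finset S) z => ∑ p ∈ t, ((z - ((p : ℝ) : ℂ)) ^ 2)⁻¹)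
      (fun z => ∑' p : S, ((z - ((p : ℝ) : ℂ)) ^ 2)⁻¹) atTop {z : ℂ | β < z.re} := by
    refine tendstoUniformlyOn_tsum hsum fun p z hz => ?_
    exact cnorm_term hβ (le_of_lt hz) p
  refine htuo.tendstoLocallyUniformlyOn.differentiableOn (Filter.Eventually.of_forall ?_) hopen
  intro t
  refine DifferentiableOn.fun_sum fun p _ => ?_
  intro z hz
  refine DifferentiableAt.differentiableWithinAt ?_
  have hne : z - ((p : ℝ) : ℂ) ≠ 0 := by
    intro h
    have : z = ((p : ℝ) : ℂ) := by rwa [sub_eq_zero] at h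
    rw [this] at hz
    simp only [Set.mem_setOf_eq, Complex.ofReal_re] at hz
    exact absurd hz (not_lt.2 (hβ p p.2).le)
  exact ((differentiable_id.sub_const _).pow 2).differentiableAt.inv (pow_ne_zero 2 hne)

private lemma factor_out {Ω : Set ℂ} (hΩ : IsOpen Ω) {g : ℂ → ℂ} (hg : DifferentiableOn ℂ g Ω)
    (q : ℕ → ℂ) (hq : ∀ i, q i ∈ Ω) (hz : ∀ i, g (q i) = 0) (hinj : Function.Injective q) :
    ∀ n, ∃ h : ℂ → ℂ, DifferentiableOn ℂ h Ω ∧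
      ∀ z, g z = h z * ∏ i ∈ Finset.range n, (z - q i) := by
  intro n
  induction n with
  | zero => exact ⟨g, hg, fun z => by simp⟩
  | succ n ih =>
    obtain ⟨h, hdiff, hfac⟩ := ih
    have hprod : (∏ i ∈ Finset.range n, (q n - q i)) ≠ 0 := by
      refine Finset.prod_ne_zero_iff.2 fun i hi => ?_
      have : i ≠ n := Nat.ne_of_lt (Finset.mem_range.1 hi)
      exact sub_ne_zero.2 fun hc => this (hinj hc).symm
    have hhn : h (q n) = 0 := by
      have := hfac (q n)
      rw [hz n] at this
      rcases mul_eq_zero.1 this.symm with h1 | h2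
      · exact h1
      · exact absurd h2 hprod
    refine ⟨dslope h (q n), (Complex.differentiableOn_dslope (hΩ.mem_nhds (hq n))).2 hdiff, fun z => ?_⟩
    have hkey : h z = (z - q n) * dslope h (q n) z := by
      have := sub_smul_dslope h (q n) z
      rw [hhn, sub_zero, smul_eq_mul] at this
      linear_combination -this
    rw [hfac z, hkey, Finset.prod_range_succ]
    ring

set_option maxHeartbeats 1000000 in
private lemma core (X Y : Set ℝ)
    (hXneg : X ⊆ Set.Iio 0) (hYneg : Y ⊆ Set.Iio 0)
    (cX : ℝ) (hcX : 0 < cX) (hdiscX : ∀ x ∈ X, ∀ y ∈ X, x ≠ y → cX ≤ |x - y|)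
    (cY : ℝ) (hcY : 0 < cY) (hdiscY : ∀ x ∈ Y, ∀ y ∈ Y, x ≠ y → cY ≤ |x - y|)
    (c C : ℝ) (hc : 0 < c) (hcC : c ≤ C)
    (w : ℕ → ℝ) (hw0 : w 0 = 0)
    (hgap : ∀ n : ℕ, 1 ≤ n → c ≤ w n - w (n - 1) ∧ w n - w (n - 1) ≤ C)
    (hforce : ∀ n : ℕ,
      (∑' x : X, (1 : ℝ) / ((x : ℝ) - w n) ^ 2) = ∑' y : Y, (1 : ℝ) / ((y : ℝ) - w n) ^ 2)
    (a : ℝ) (haX : a ∈ X) (haYn : a ∉ Y)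
    (hup : ∀ p : ℝ, a < p → (p ∈ X ↔ p ∈ Y)) : False := by
  have ha0 : a < 0 := hXneg haX
  -- facts about w
  have hstep : ∀ n : ℕ, c ≤ w (n + 1) - w n ∧ w (n + 1) - w n ≤ C := by
    intro n
    have h := hgap (n + 1) (by omega)
    rwa [Nat.add_sub_cancel] at h
  have hwmono : StrictMono w := strictMono_nat_of_lt_succ fun n => by linarith [(hstep n).1]
  have hw_nonneg : ∀ n, 0 ≤ w n := by
    intro n
    have := hwmono.monotone (Nat.zero_le n)
    rw [hw0] at this
    exact this
  have hw_ub : ∀ n : ℕ, w n ≤ n * C := by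
    intro n
    induction n with
    | zero => simp [hw0]
    | succ n ih =>
      have := (hstep n).2
      push_cast
      push_cast at ih
      nlinarith
  -- the truncated sets
  set X' : Set ℝ := X ∩ Set.Iic a with hX'def
  set Y' : Set ℝ := Y ∩ Set.Iic a with hY'def
  have hsepX' : ∀ x ∈ X', ∀ y ∈ X', x ≠ y → cX ≤ |x - y| := fun x hx y hy =>
    hdiscX x hx.1 y hy.1
  have hsepY' : ∀ x ∈ Y', ∀ y ∈ Y', x ≠ y → cY ≤ |x - y| := fun x hx y hy =>
    hdiscY x hx.1 y hy.1
  have hY'lt : ∀ p ∈ Y', p < a := fun p hp =>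
    lt_of_le_of_ne hp.2 fun h => haYn (h ▸ hp.1)
  have hX'le : ∀ p ∈ X', p ≤ a := fun p hp => hp.2
  have haX' : a ∈ X' := ⟨haX, le_refl a⟩
  -- summability
  have SX : ∀ {r : ℝ}, a < r → Summable (fun p : X' => ((r - (p : ℝ)) ^ 2)⁻¹) :=
    fun {r} hr => summable_inv_sq hcX hsepX' fun p hp => lt_of_le_of_lt (hX'le p hp) hr
  have SY : ∀ {r : ℝ}, a ≤ r → Summable (fun p : Y' => ((r - (p : ℝ)) ^ 2)⁻¹) :=
    fun {r} hr => summable_inv_sq hcY hsepY' fun p hp => lt_of_lt_of_le (hY'lt p hp) hr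
  set KY : ℝ := ∑' y : Y', ((a - (y : ℝ)) ^ 2)⁻¹ with hKYdef
  have hKY0 : 0 ≤ KY := tsum_nonneg fun y => by positivity
  -- choice of t
  set M : ℝ := 2 * (KY + 1) with hMdef
  have hM0 : 0 < M := by simp only [hMdef]; linarith
  set ε : ℝ := min (-a / 2) M⁻¹ with hεdef
  have hε0 : 0 < ε := lt_min (by linarith) (by positivity)
  set t : ℝ := a + ε with htdef
  have hat : a < t := by simp only [htdef]; linarith
  have ht0 : t < 0 := by
    have h1 : ε ≤ -a / 2 := min_le_left _ _
    simp only [htdef]; linarith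
  have hKYt : KY < ((t - a) ^ 2)⁻¹ := by
    have h2 : ε ≤ M⁻¹ := min_le_right _ _
    have h3 : t - a = ε := by simp [htdef]
    rw [h3]
    have h1 : ε ^ 2 ≤ (M ^ 2)⁻¹ := by
      rw [← inv_pow]
      exact pow_le_pow_left₀ hε0.le h2 2
    have h4 : M ^ 2 ≤ (ε ^ 2)⁻¹ := by
      rw [← inv_inv (M ^ 2)]
      exact inv_anti₀ (by positivity) h1
    have h5 : KY < M ^ 2 := by simp only [hMdef]; nlinarith
    linarith
  -- positivity of the real quantity at t
  have hlower : ((t - a) ^ 2)⁻¹ ≤ ∑' x : X', ((t - (x : ℝ)) ^ 2)⁻¹ := by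
    have h := Summable.le_tsum (SX hat) (⟨a, haX'⟩ : X') fun j _ => by positivity
    simpa using h
  have hupper : (∑' y : Y', ((t - (y : ℝ)) ^ 2)⁻¹) ≤ KY := by
    rw [hKYdef]
    refine Summable.tsum_le_tsum (fun y => ?_) (SY hat.le) (SY le_rfl)
    have h1 : 0 < a - (y : ℝ) := by linarith [hY'lt y y.2]
    exact inv_anti₀ (by positivity) (by nlinarith)
  have hgRpos : 0 < (∑' x : X', ((t - (x : ℝ)) ^ 2)⁻¹) - ∑' y : Y', ((t - (y : ℝ)) ^ 2)⁻¹ := by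
    linarith
  -- the complex function
  set α : ℝ := (a + t) / 2 with hαdef
  have haα : a < α := by simp only [hαdef]; linarith
  have hαt : α < t := by simp only [hαdef]; linarith
  have hα0 : α < 0 := by linarith
  set β : ℝ := (a + α) / 2 with hβdef
  have haβ : a < β := by simp only [hβdef]; linarith
  have hβα : β < α := by simp only [hβdef]; linarith
  set Ω : Set ℂ := {z : ℂ | β < z.re} with hΩdef
  have hΩopen : IsOpen Ω := isOpen_lt continuous_const Complex.continuous_re
  have hX'β : ∀ p ∈ X', p < β := fun p hp => lt_of_le_of_lt (hX'le p hp) haβ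
  have hY'β : ∀ p ∈ Y', p < β := fun p hp => lt_of_lt_of_le (hY'lt p hp) haβ.le
  have hX'α : ∀ p ∈ X', p < α := fun p hp => lt_of_le_of_lt (hX'le p hp) haα
  have hY'α : ∀ p ∈ Y', p < α := fun p hp => lt_of_lt_of_le (hY'lt p hp) haα.le
  set GX : ℂ → ℂ := fun z => ∑' p : X', ((z - ((p : ℝ) : ℂ)) ^ 2)⁻¹ with hGXdef
  set GY : ℂ → ℂ := fun z => ∑' p : Y', ((z - ((p : ℝ) : ℂ)) ^ 2)⁻¹ with hGYdef
  set g : ℂ → ℂ := fun z => GX z - GY z with hgdef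
  have hSXβ : Summable (fun p : X' => ((β - (p : ℝ)) ^ 2)⁻¹) := SX haβ
  have hSYβ : Summable (fun p : Y' => ((β - (p : ℝ)) ^ 2)⁻¹) := SY haβ.le
  have hgdiff : DifferentiableOn ℂ g Ω :=
    (cdiff hX'β hSXβ).sub (cdiff hY'β hSYβ)
  -- the cast lemma
  have hcast : ∀ (S : Set ℝ) (r : ℝ),
      (∑' p : S, (((r : ℂ) - ((p : ℝ) : ℂ)) ^ 2)⁻¹)
        = ((∑' p : S, ((r - (p : ℝ)) ^ 2)⁻¹ : ℝ) : ℂ) := by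
    intro S r
    rw [Complex.ofReal_tsum]
    refine tsum_congr fun p => ?_
    push_cast
    ring
  -- zeros of g
  have hzero : ∀ n : ℕ, 1 ≤ n → g ((w n : ℝ) : ℂ) = 0 := by
    intro n hn
    have hwn : 0 < w n := by
      have := hwmono (show 0 < n by omega)
      rw [hw0] at this
      exact this
    have hEq : (∑' x : X, ((w n - (x : ℝ)) ^ 2)⁻¹) = ∑' y : Y, ((w n - (y : ℝ)) ^ 2)⁻¹ := by
      have h := hforce n
      have e1 : ∀ S : Set ℝ,
          (∑' x : S, (1 : ℝ) / ((x : ℝ) - w n) ^ 2) = ∑' x : S, ((w n - (x : ℝ)) ^ 2)⁻¹ := by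
        intro S
        refine tsum_congr fun x => ?_
        rw [one_div]
        congr 1
        ring
      rw [e1 X, e1 Y] at h
      exact h
    have hsplit : ∀ (S : Set ℝ) (cS : ℝ), 0 < cS →
        (∀ x ∈ S, ∀ y ∈ S, x ≠ y → cS ≤ |x - y|) → S ⊆ Set.Iio 0 →
        (∑' x : S, ((w n - (x : ℝ)) ^ 2)⁻¹)
          = (∑' x : (S ∩ Set.Iic a : Set ℝ), ((w n - (x : ℝ)) ^ 2)⁻¹)
            + ∑' x : (S ∩ Set.Ioi a : Set ℝ), ((w n - (x : ℝ)) ^ 2)⁻¹ := by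
      intro S cS hcS hsepS hSneg
      have hd : Disjoint (S ∩ Set.Iic a) (S ∩ Set.Ioi a) := by
        refine Set.disjoint_left.2 fun p hp1 hp2 => ?_
        exact absurd (show p ≤ a from hp1.2) (not_le.2 hp2.2)
      have hunion : (S ∩ Set.Iic a) ∪ (S ∩ Set.Ioi a) = S := by
        rw [← Set.inter_union_distrib_left, Set.Iic_union_Ioi, Set.inter_univ]
      have h1 : Summable ((fun p : ℝ => ((w n - p) ^ 2)⁻¹) ∘
          ((↑) : (S ∩ Set.Iic a : Set ℝ) → ℝ)) :=
        summable_inv_sq hcS (fun x hx y hy => hsepS x hx.1 y hy.1)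
          fun p hp => lt_trans (hSneg hp.1) hwn
      have h2 : Summable ((fun p : ℝ => ((w n - p) ^ 2)⁻¹) ∘
          ((↑) : (S ∩ Set.Ioi a : Set ℝ) → ℝ)) :=
        summable_inv_sq hcS (fun x hx y hy => hsepS x hx.1 y hy.1)
          fun p hp => lt_trans (hSneg hp.1) hwn
      calc (∑' x : S, ((w n - (x : ℝ)) ^ 2)⁻¹)
          = ∑' x : ((S ∩ Set.Iic a) ∪ (S ∩ Set.Ioi a) : Set ℝ), ((w n - (x : ℝ)) ^ 2)⁻¹ := by
            rw [hunion]
        _ = _ := Summable.tsum_union_disjoint hd h1 h2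
    have hXIoi : X ∩ Set.Ioi a = Y ∩ Set.Ioi a := by
      ext p
      constructor
      · rintro ⟨h1, h2⟩; exact ⟨(hup p h2).1 h1, h2⟩
      · rintro ⟨h1, h2⟩; exact ⟨(hup p h2).2 h1, h2⟩
    rw [hsplit X cX hcX hdiscX hXneg, hsplit Y cY hcY hdiscY hYneg, hXIoi] at hEq
    have hreal : (∑' x : X', ((w n - (x : ℝ)) ^ 2)⁻¹) = ∑' y : Y', ((w n - (y : ℝ)) ^ 2)⁻¹ := by
      rw [← hX'def, ← hY'def] at hEq
      linarith
    show (∑' p : X', ((((w n : ℝ) : ℂ) - ((p : ℝ) : ℂ)) ^ 2)⁻¹)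
        - (∑' p : Y', ((((w n : ℝ) : ℂ) - ((p : ℝ) : ℂ)) ^ 2)⁻¹) = 0
    rw [hcast X' (w n), hcast Y' (w n), ← Complex.ofReal_sub, hreal, sub_self,
      Complex.ofReal_zero]
  -- nodes
  set q : ℕ → ℝ := fun i => w (i + 1) with hqdef
  have hq_pos : ∀ i, 0 < q i := by
    intro i
    have := hwmono (show 0 < i + 1 by omega)
    rw [hw0] at this
    exact this
  have hq_t : ∀ i, t < q i := fun i => lt_trans ht0 (hq_pos i)
  have hq_α : ∀ i, α < q i := fun i => lt_trans hα0 (hq_pos i)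
  have hq_Ω : ∀ i, ((q i : ℝ) : ℂ) ∈ Ω := by
    intro i
    simp only [hΩdef, Set.mem_setOf_eq, Complex.ofReal_re]
    linarith [hq_pos i, hβα, hα0]
  have hq_ub : ∀ i : ℕ, q i ≤ (i + 1) * C := by
    intro i
    have := hw_ub (i + 1)
    push_cast at this
    simpa [hqdef] using this
  have hq_inj : Function.Injective fun i => ((q i : ℝ) : ℂ) := by
    intro i j hij
    simp only [Complex.ofReal_inj] at hij
    have := hwmono.injective hij
    omega
  have hgq : ∀ i, g ((q i : ℝ) : ℂ) = 0 := fun i => hzero (i + 1) (by omega)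
  -- global bound
  set BX : ℝ := ∑' x : X', ((α - (x : ℝ)) ^ 2)⁻¹ with hBXdef
  set BY : ℝ := ∑' y : Y', ((α - (y : ℝ)) ^ 2)⁻¹ with hBYdef
  set B : ℝ := BX + BY with hBdef
  have hB : ∀ z : ℂ, α ≤ z.re → ‖g z‖ ≤ B := by
    intro z hz
    calc ‖GX z - GY z‖ ≤ ‖GX z‖ + ‖GY z‖ := norm_sub_le _ _
      _ ≤ BX + BY :=
        add_le_add (cnorm_bound hX'α (SX haα) hz) (cnorm_bound hY'α (SY haα.le) hz)
  have hB0 : 0 ≤ B := by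
    have h1 : 0 ≤ BX := tsum_nonneg fun x => by positivity
    have h2 : 0 ≤ BY := tsum_nonneg fun y => by positivity
    linarith
  -- main estimate
  have hmain : ∀ n : ℕ, ‖g ((t : ℝ) : ℂ)‖
      ≤ B * ∏ i ∈ Finset.range n, ((q i - t) / (q i - α)) := by
    intro n
    obtain ⟨h, hdiff, hfac⟩ :=
      factor_out hΩopen hgdiff (fun i => ((q i : ℝ) : ℂ)) hq_Ω hgq hq_inj n
    set P : ℝ := ∏ i ∈ Finset.range n, (q i - α) with hPdef
    have hP0 : 0 < P := Finset.prod_pos fun i _ => by linarith [hq_α i]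
    set R : ℝ := 2 * (w n - α) + (t - α) + 1 with hRdef
    have hR0 : t - α < R := by
      have := hw_nonneg n
      simp only [hRdef]
      linarith
    have hRpos : 0 < R := by linarith [hαt]
    have hRq : ∀ i ∈ Finset.range n, q i - α ≤ R - (q i - α) := by
      intro i hi
      have hqw : q i ≤ w n := by
        have h1 : i + 1 ≤ n := Finset.mem_range.1 hi
        exact hwmono.monotone h1
      simp only [hRdef]
      linarith [hαt]
    set U : Set ℂ := Metric.ball ((α : ℝ) : ℂ) R ∩ {z : ℂ | α < z.re} with hUdef
    have hUopen : IsOpen U :=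
      Metric.isOpen_ball.inter (isOpen_lt continuous_const Complex.continuous_re)
    have hUb : Bornology.IsBounded U := Metric.isBounded_ball.subset Set.inter_subset_left
    have hUsub : U ⊆ Ω := fun z hz => lt_trans hβα hz.2
    have hclosure : closure U ⊆ Metric.closedBall ((α : ℝ) : ℂ) R ∩ {z : ℂ | α ≤ z.re} := by
      refine closure_minimal (fun z hz => ?_) ?_
      · have h1 : α < z.re := hz.2
        exact ⟨Metric.ball_subset_closedBall hz.1, le_of_lt h1⟩
      exact Metric.isClosed_closedBall.inter (isClosed_le continuous_const Complex.continuous_re)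
    have hclΩ : closure U ⊆ Ω := fun z hz => lt_of_lt_of_le hβα (hclosure hz).2
    have hdc : DiffContOnCl ℂ h U :=
      ⟨hdiff.mono hUsub, (hdiff.continuousOn).mono hclΩ⟩
    have hfront : ∀ z ∈ frontier U, ‖h z‖ ≤ B / P := by
      intro z hzf
      have hzc : z ∈ closure U := frontier_subset_closure hzf
      have hznU : z ∉ U := by
        rw [hUopen.frontier_eq] at hzf
        exact hzf.2
      obtain ⟨hz1, hz2⟩ := hclosure hzc
      have hz2' : α ≤ z.re := hz2
      have hzb : ‖z - ((α : ℝ) : ℂ)‖ ≤ R := by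
        rw [Metric.mem_closedBall, dist_eq_norm] at hz1
        exact hz1
      have hcases : z.re = α ∨ ‖z - ((α : ℝ) : ℂ)‖ = R := by
        by_contra hcon
        push_neg at hcon
        apply hznU
        constructor
        · rw [Metric.mem_ball, dist_eq_norm]
          exact lt_of_le_of_ne hzb hcon.2
        · exact lt_of_le_of_ne hz2' fun h => hcon.1 h.symm
      have hfactor : ∀ i ∈ Finset.range n, q i - α ≤ ‖z - ((q i : ℝ) : ℂ)‖ := by
        intro i hi
        rcases hcases with hca | hcb
        · have hre : (z - ((q i : ℝ) : ℂ)).re = z.re - q i := by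
            simp [Complex.sub_re]
          calc q i - α = -(z.re - q i) := by rw [hca]; ring
            _ ≤ |z.re - q i| := neg_le_abs _
            _ = |(z - ((q i : ℝ) : ℂ)).re| := by rw [hre]
            _ ≤ ‖z - ((q i : ℝ) : ℂ)‖ := Complex.abs_re_le_norm _
        · have h1 : ‖((q i : ℝ) : ℂ) - ((α : ℝ) : ℂ)‖ = q i - α := by
            rw [← Complex.ofReal_sub, Complex.norm_real, Real.norm_eq_abs]
            exact abs_of_pos (by linarith [hq_α i])
          have h2 : ‖z - ((α : ℝ) : ℂ)‖ - ‖z - ((q i : ℝ) : ℂ)‖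
              ≤ ‖((q i : ℝ) : ℂ) - ((α : ℝ) : ℂ)‖ := by
            have h3 := norm_sub_norm_le (z - ((α : ℝ) : ℂ)) (z - ((q i : ℝ) : ℂ))
            have h4 : (z - ((α : ℝ) : ℂ)) - (z - ((q i : ℝ) : ℂ))
                = ((q i : ℝ) : ℂ) - ((α : ℝ) : ℂ) := by ring
            rwa [h4] at h3
          rw [hcb, h1] at h2
          linarith [hRq i hi]
      have hgz : ‖g z‖ ≤ B := hB z hz2'
      have hprod_eq : ‖g z‖ = ‖h z‖ * ∏ i ∈ Finset.range n, ‖z - ((q i : ℝ) : ℂ)‖ := by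
        rw [hfac z, norm_mul, norm_prod]
      have hPle : P ≤ ∏ i ∈ Finset.range n, ‖z - ((q i : ℝ) : ℂ)‖ :=
        Finset.prod_le_prod (fun i _ => by linarith [hq_α i]) hfactor
      rw [le_div_iff₀ hP0]
      calc ‖h z‖ * P ≤ ‖h z‖ * ∏ i ∈ Finset.range n, ‖z - ((q i : ℝ) : ℂ)‖ :=
            mul_le_mul_of_nonneg_left hPle (norm_nonneg _)
        _ = ‖g z‖ := hprod_eq.symm
        _ ≤ B := hgz
    have htU : ((t : ℝ) : ℂ) ∈ closure U := by
      refine subset_closure ⟨?_, ?_⟩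
      · rw [Metric.mem_ball, dist_eq_norm, ← Complex.ofReal_sub, Complex.norm_real, Real.norm_eq_abs]
        rw [abs_of_pos (by linarith [hαt])]
        exact hR0
      · simp only [Set.mem_setOf_eq, Complex.ofReal_re]
        exact hαt
    have hht := Complex.norm_le_of_forall_mem_frontier_norm_le hUb hdc hfront htU
    have hnorm_ti : ∀ i : ℕ, ‖((t : ℝ) : ℂ) - ((q i : ℝ) : ℂ)‖ = q i - t := by
      intro i
      rw [← Complex.ofReal_sub, Complex.norm_real, Real.norm_eq_abs, abs_of_neg (by linarith [hq_t i])]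
      ring
    have hprodpos : (0:ℝ) ≤ ∏ i ∈ Finset.range n, (q i - t) :=
      Finset.prod_nonneg fun i _ => by linarith [hq_t i]
    calc ‖g ((t : ℝ) : ℂ)‖
        = ‖h ((t : ℝ) : ℂ)‖ * ∏ i ∈ Finset.range n, (q i - t) := by
          rw [hfac, norm_mul, norm_prod]
          congr 1
          exact Finset.prod_congr rfl fun i _ => hnorm_ti i
      _ ≤ (B / P) * ∏ i ∈ Finset.range n, (q i - t) :=
          mul_le_mul_of_nonneg_right hht hprodpos
      _ = B * ∏ i ∈ Finset.range n, ((q i - t) / (q i - α)) := by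
          rw [Finset.prod_div_distrib, ← hPdef]
          field_simp
  -- the product tends to zero
  set d : ℝ := t - α with hddef
  have hd0 : 0 < d := by simp only [hddef]; linarith
  have hCα : 0 < C - α := by linarith
  set k : ℝ := d / (C - α) with hkdef
  have hk0 : 0 < k := div_pos hd0 hCα
  have hratio : ∀ i : ℕ, (q i - t) / (q i - α) ≤ Real.exp (-(k * (1 / (i + 1)))) := by
    intro i
    have h1 : 0 < q i - α := by linarith [hq_α i]
    have h2 : (q i - t) / (q i - α) = 1 - d / (q i - α) := by
      have h2a : q i - t = (q i - α) - d := by simp only [hddef]; ring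
      rw [h2a, sub_div, div_self h1.ne']
    have h4 : q i - α ≤ (i + 1) * (C - α) := by
      have h5 := hq_ub i
      have h6 : (0 : ℝ) ≤ (i : ℝ) := Nat.cast_nonneg i
      nlinarith
    have h3 : k * (1 / (i + 1)) ≤ d / (q i - α) := by
      have h7 : k * (1 / ((i : ℝ) + 1)) = d / ((i + 1) * (C - α)) := by
        rw [hkdef, div_mul_div_comm, mul_one, mul_comm]
      rw [h7]
      exact div_le_div_of_nonneg_left hd0.le h1 h4
    calc (q i - t) / (q i - α) = 1 - d / (q i - α) := h2
      _ ≤ 1 - k * (1 / (i + 1)) := by linarith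
      _ ≤ Real.exp (-(k * (1 / (i + 1)))) := by
        have := Real.add_one_le_exp (-(k * (1 / ((i : ℝ) + 1))))
        linarith
  have hprod_le : ∀ n : ℕ, (∏ i ∈ Finset.range n, ((q i - t) / (q i - α)))
      ≤ Real.exp (-(k * ∑ i ∈ Finset.range n, (1 / ((i : ℝ) + 1)))) := by
    intro n
    calc (∏ i ∈ Finset.range n, ((q i - t) / (q i - α)))
        ≤ ∏ i ∈ Finset.range n, Real.exp (-(k * (1 / (i + 1)))) :=
          Finset.prod_le_prod
            (fun i _ => div_nonneg (by linarith [hq_t i]) (by linarith [hq_α i]))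
            fun i _ => hratio i
      _ = Real.exp (∑ i ∈ Finset.range n, -(k * (1 / ((i : ℝ) + 1)))) :=
          (Real.exp_sum _ _).symm
      _ = Real.exp (-(k * ∑ i ∈ Finset.range n, (1 / ((i : ℝ) + 1)))) := by
          congr 1
          rw [Finset.mul_sum, ← Finset.sum_neg_distrib]
  have hS : Filter.Tendsto (fun n => ∑ i ∈ Finset.range n, (1 / ((i : ℝ) + 1)))
      Filter.atTop Filter.atTop := by
    have := Real.tendsto_sum_range_one_div_nat_succ_atTop
    refine this.congr fun n => Finset.sum_congr rfl fun i _ => by push_cast; ring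
  have hexp : Filter.Tendsto
      (fun n => B * Real.exp (-(k * ∑ i ∈ Finset.range n, (1 / ((i : ℝ) + 1)))))
      Filter.atTop (nhds 0) := by
    have h1 : Filter.Tendsto (fun n => -(k * ∑ i ∈ Finset.range n, (1 / ((i : ℝ) + 1))))
        Filter.atTop Filter.atBot := by
      refine Filter.tendsto_neg_atBot_iff.2 ?_
      exact hS.const_mul_atTop hk0
    have h2 := Real.tendsto_exp_atBot.comp h1
    have h3 := h2.const_mul B
    simpa using h3
  have hfinal : ‖g ((t : ℝ) : ℂ)‖ ≤ 0 := by
    refine ge_of_tendsto hexp (Filter.Eventually.of_forall fun n => ?_)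
    calc ‖g ((t : ℝ) : ℂ)‖ ≤ B * ∏ i ∈ Finset.range n, ((q i - t) / (q i - α)) := hmain n
      _ ≤ B * Real.exp (-(k * ∑ i ∈ Finset.range n, (1 / ((i : ℝ) + 1)))) :=
          mul_le_mul_of_nonneg_left (hprod_le n) hB0
  have hgt0 : g ((t : ℝ) : ℂ) = 0 := norm_le_zero_iff.1 hfinal
  have hcastt : g ((t : ℝ) : ℂ)
      = (((∑' x : X', ((t - (x : ℝ)) ^ 2)⁻¹) - ∑' y : Y', ((t - (y : ℝ)) ^ 2)⁻¹ : ℝ) : ℂ) := by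
    show (∑' p : X', (((t : ℂ) - ((p : ℝ) : ℂ)) ^ 2)⁻¹)
        - (∑' p : Y', (((t : ℂ) - ((p : ℝ) : ℂ)) ^ 2)⁻¹) = _
    rw [hcast X' t, hcast Y' t, ← Complex.ofReal_sub]
  rw [hcastt] at hgt0
  have := Complex.ofReal_eq_zero.1 hgt0
  linarith

/-- The Coulomb force field exerted at the points of a uniformly spread sequence
`W = {0 = w₀ < w₁ < …} ⊆ [0, ∞)` determines a uniformly discrete configuration of
particles on `(-∞, 0)` uniquely. -/
theorem stmt_8 (X Y : Set ℝ)
    (hXneg : X ⊆ Set.Iio 0) (hYneg : Y ⊆ Set.Iio 0)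
    (cX : ℝ) (hcX : 0 < cX) (hdiscX : ∀ x ∈ X, ∀ y ∈ X, x ≠ y → cX ≤ |x - y|)
    (cY : ℝ) (hcY : 0 < cY) (hdiscY : ∀ x ∈ Y, ∀ y ∈ Y, x ≠ y → cY ≤ |x - y|)
    (c C : ℝ) (hc : 0 < c) (hcC : c ≤ C)
    (w : ℕ → ℝ) (hw0 : w 0 = 0)
    (hgap : ∀ n : ℕ, 1 ≤ n → c ≤ w n - w (n - 1) ∧ w n - w (n - 1) ≤ C)
    (hforce : ∀ n : ℕ,
      (∑' x : X, (1 : ℝ) / ((x : ℝ) - w n) ^ 2) = ∑' y : Y, (1 : ℝ) / ((y : ℝ) - w n) ^ 2) :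
    X = Y := by
  by_contra hne
  set D1 : Set ℝ := X \ Y with hD1
  set D2 : Set ℝ := Y \ X with hD2
  have hbdd1 : BddAbove D1 := ⟨0, fun p hp => (hXneg hp.1).le⟩
  have hbdd2 : BddAbove D2 := ⟨0, fun p hp => (hYneg hp.1).le⟩
  have hsep1 : ∀ x ∈ D1, ∀ y ∈ D1, x ≠ y → cX ≤ |x - y| := fun x hx y hy =>
    hdiscX x hx.1 y hy.1
  have hsep2 : ∀ x ∈ D2, ∀ y ∈ D2, x ≠ y → cY ≤ |x - y| := fun x hx y hy =>
    hdiscY x hx.1 y hy.1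
  have key : ∃ a, (a ∈ D1 ∨ a ∈ D2) ∧ (∀ p ∈ D1, p ≤ a) ∧ ∀ p ∈ D2, p ≤ a := by
    rcases D1.eq_empty_or_nonempty with h1 | h1
    · rcases D2.eq_empty_or_nonempty with h2 | h2
      · exfalso
        apply hne
        ext p
        constructor
        · intro hp
          by_contra hq
          have hmem : p ∈ D1 := ⟨hp, hq⟩
          rw [h1] at hmem
          exact hmem
        · intro hp
          by_contra hq
          have hmem : p ∈ D2 := ⟨hp, hq⟩
          rw [h2] at hmem
          exact hmem
      · obtain ⟨m2, hm2, hmax2⟩ := sep_max hcY hsep2 h2 hbdd2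
        refine ⟨m2, Or.inr hm2, fun p hp => ?_, hmax2⟩
        rw [h1] at hp
        exact absurd hp (Set.notMem_empty p)
    · obtain ⟨m1, hm1, hmax1⟩ := sep_max hcX hsep1 h1 hbdd1
      rcases D2.eq_empty_or_nonempty with h2 | h2
      · refine ⟨m1, Or.inl hm1, hmax1, fun p hp => ?_⟩
        rw [h2] at hp
        exact absurd hp (Set.notMem_empty p)
      · obtain ⟨m2, hm2, hmax2⟩ := sep_max hcY hsep2 h2 hbdd2
        rcases le_total m1 m2 with hle | hle
        · exact ⟨m2, Or.inr hm2, fun p hp => le_trans (hmax1 p hp) hle, hmax2⟩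
        · exact ⟨m1, Or.inl hm1, hmax1, fun p hp => le_trans (hmax2 p hp) hle⟩
  obtain ⟨a, hmem, hub1, hub2⟩ := key
  have hup : ∀ p, a < p → (p ∈ X ↔ p ∈ Y) := by
    intro p hp
    constructor
    · intro hpX
      by_contra hpY
      exact absurd hp (not_lt.2 (hub1 p ⟨hpX, hpY⟩))
    · intro hpY
      by_contra hpX
      exact absurd hp (not_lt.2 (hub2 p ⟨hpY, hpX⟩))
  rcases hmem with h1 | h2
  · exact core X Y hXneg hYneg cX hcX hdiscX cY hcY hdiscY c C hc hcC w hw0 hgap hforce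
      a h1.1 h1.2 hup
  · exact core Y X hYneg hXneg cY hcY hdiscY cX hcX hdiscX c C hc hcC w hw0 hgap
      (fun n => (hforce n).symm) a h2.1 h2.2 fun p hp => (hup p hp).symm
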